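/- arXiv:2301.00105 — 3 statements merged into one kernel-verified Lean document; each statement's English description precedes it below -/
import Mathlib

section
/- Let C be a real number satisfying (k₁ − k₂)/2 + sgn(C)(k₁ + k₂) ∫₀^{|C|} f(z) dz = 0, where sgn(c) = 1 for c ≥ 0 and sgn(c) = −1 for c < 0. Then Var[L(Z + C)] = (k₁² + k₂²) ∫₀^∞ z² f(z) dz − 2(k₁ + k₂)² (∫₀^{|C|} f(z) dz)(∫₀^{|C|} z² f(z) dz) − 4|C| (k₁ + k₂)² (∫₀^{|C|} f(z) dz)(∫_{|C|}^∞ z f(z) dz) + C²(k₁ + k₂)²/4 − (k₁ + k₂)² (∫_{|C|}^∞ z f(z) dz)² − C²(k₁ + k₂)² (∫₀^{|C|} f(z) dz)². -/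
open MeasureTheory ProbabilityTheory Set

private lemma lin2_aux {ν : MeasureTheory.Measure ℝ} {g1 g2 : ℝ → ℝ}
    (h1 : MeasureTheory.Integrable g1 ν) (h2 : MeasureTheory.Integrable g2 ν) (a b : ℝ) :
    ∫ z, (a * g1 z + b * g2 z) ∂ν = a * (∫ z, g1 z ∂ν) + b * (∫ z, g2 z ∂ν) := by
  have t : ∫ z, (a * g1 z + b * g2 z) ∂ν = (∫ z, a * g1 z ∂ν) + ∫ z, b * g2 z ∂ν :=
    MeasureTheory.integral_add (h1.const_mul a) (h2.const_mul b)
  rw [t, MeasureTheory.integral_const_mul, MeasureTheory.integral_const_mul]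

private lemma lin3_aux {ν : MeasureTheory.Measure ℝ} {g1 g2 g3 : ℝ → ℝ}
    (h1 : MeasureTheory.Integrable g1 ν) (h2 : MeasureTheory.Integrable g2 ν)
    (h3 : MeasureTheory.Integrable g3 ν) (a b c : ℝ) :
    ∫ z, (a * g1 z + b * g2 z + c * g3 z) ∂ν
      = a * (∫ z, g1 z ∂ν) + b * (∫ z, g2 z ∂ν) + c * (∫ z, g3 z ∂ν) := by
  have h12 : MeasureTheory.Integrable (fun z => a * g1 z + b * g2 z) ν :=
    (h1.const_mul a).add (h2.const_mul b)
  have t1 : ∫ z, (a * g1 z + b * g2 z + c * g3 z) ∂ν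
      = (∫ z, (a * g1 z + b * g2 z) ∂ν) + ∫ z, c * g3 z ∂ν :=
    MeasureTheory.integral_add h12 (h3.const_mul c)
  rw [t1, lin2_aux h1 h2, MeasureTheory.integral_const_mul]

set_option maxHeartbeats 1000000 in
/-- If `C` satisfies `(k₁ − k₂)/2 + sgn(C)(k₁ + k₂) ∫₀^{|C|} f = 0`, then
`Var[L(Z + C)]` equals the stated expression. -/
theorem variance_loss_at_minimizer
    {Ω : Type*} [MeasurableSpace Ω] (μ : Measure Ω) [IsProbabilityMeasure μ]
    (f : ℝ → ℝ) (hf_meas : Measurable f) (hf_nonneg : ∀ x, 0 ≤ f x)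
    (hf_total : ∫ z, f z = 1)
    (hf_symm : ∀ x, f (-x) = f x)
    (hf_mono : ∀ x y : ℝ, 0 ≤ x → x ≤ y → f y ≤ f x)
    (Z : Ω → ℝ) (hZ : Measurable Z)
    (hdens : Measure.map Z μ = volume.withDensity (fun z => ENNReal.ofReal (f z)))
    (hmom : Integrable (fun z => z ^ 2 * f z))
    (k₁ k₂ : ℝ) (hk₁ : 0 < k₁) (hk₂ : 0 < k₂)
    (L : ℝ → ℝ) (hL : ∀ z, L z = if 0 ≤ z then k₁ * z else -k₂ * z)
    (C : ℝ)
    (hC : (k₁ - k₂) / 2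
        + (if 0 ≤ C then (1:ℝ) else -1) * (k₁ + k₂) * (∫ z in (0:ℝ)..|C|, f z) = 0) :
    variance (fun ω => L (Z ω + C)) μ
      = (k₁ ^ 2 + k₂ ^ 2) * (∫ z in Set.Ioi (0:ℝ), z ^ 2 * f z)
        - 2 * (k₁ + k₂) ^ 2 * (∫ z in (0:ℝ)..|C|, f z) * (∫ z in (0:ℝ)..|C|, z ^ 2 * f z)
        - 4 * |C| * (k₁ + k₂) ^ 2 * (∫ z in (0:ℝ)..|C|, f z) * (∫ z in Set.Ioi |C|, z * f z)
        + C ^ 2 * (k₁ + k₂) ^ 2 / 4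
        - (k₁ + k₂) ^ 2 * (∫ z in Set.Ioi |C|, z * f z) ^ 2
        - C ^ 2 * (k₁ + k₂) ^ 2 * (∫ z in (0:ℝ)..|C|, f z) ^ 2 := by
  -- basic integrability
  have hprob : IsProbabilityMeasure (Measure.map Z μ) := Measure.isProbabilityMeasure_map hZ.aemeasurable
  have hlint : ∫⁻ z, ENNReal.ofReal (f z) = 1 := by
    have h := hprob.measure_univ
    rw [hdens, withDensity_apply _ MeasurableSet.univ, setLIntegral_univ] at h
    exact h
  have hf_int : Integrable f := by
    refine ⟨hf_meas.aestronglyMeasurable, ?_⟩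
    rw [hasFiniteIntegral_iff_ofReal (Filter.Eventually.of_forall hf_nonneg), hlint]
    exact ENNReal.one_lt_top
  have hzf_int : Integrable (fun z => z * f z) := by
    refine (hf_int.add hmom).mono' ((measurable_id.mul hf_meas).aestronglyMeasurable) ?_
    refine Filter.Eventually.of_forall fun z => ?_
    have h1 : |z| ≤ 1 + z ^ 2 := by nlinarith [abs_nonneg z, sq_abs z]
    have h2 : ‖z * f z‖ = |z| * f z := by
      rw [Real.norm_eq_abs, abs_mul, abs_of_nonneg (hf_nonneg z)]
    simp only [Pi.add_apply, h2]
    nlinarith [hf_nonneg z, mul_le_mul_of_nonneg_right h1 (hf_nonneg z)]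
  -- transfer lemmas
  have hwd : (fun z => ENNReal.ofReal (f z)) = (fun z => ((f z).toNNReal : ENNReal)) := rfl
  have transfer : ∀ g : ℝ → ℝ, Measurable g → ∫ ω, g (Z ω) ∂μ = ∫ z, g z * f z := by
    intro g hg
    rw [← integral_map hZ.aemeasurable hg.aestronglyMeasurable, hdens, hwd,
      integral_withDensity_eq_integral_smul (hf_meas.real_toNNReal) g]
    congr 1
    funext z
    simp [NNReal.smul_def, Real.coe_toNNReal _ (hf_nonneg z), mul_comm]
  have transferInt : ∀ g : ℝ → ℝ, Measurable g → Integrable (fun z => g z * f z) →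
      Integrable (fun ω => g (Z ω)) μ := by
    intro g hg hgf
    have h1 : Integrable g (Measure.map Z μ) := by
      rw [hdens, integrable_withDensity_iff (hf_meas.ennreal_ofReal)
        (Filter.Eventually.of_forall fun z => ENNReal.ofReal_lt_top)]
      simpa [ENNReal.toReal_ofReal (hf_nonneg _)] using hgf
    exact (integrable_map_measure hg.aestronglyMeasurable hZ.aemeasurable).1 h1
  -- symmetry facts
  have hsymF : ∀ c : ℝ, ∫ z in Iic (-c), f z = ∫ z in Ioi c, f z := by
    intro c
    have h := integral_comp_neg_Iic (-c) f
    simp only [hf_symm, neg_neg] at h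
    exact h
  have hsymG : ∀ c : ℝ, ∫ z in Iic (-c), z * f z = -∫ z in Ioi c, z * f z := by
    intro c
    have h := integral_comp_neg_Iic (-c) (fun x => x * f x)
    simp only [hf_symm, neg_neg, neg_mul, integral_neg] at h
    linarith
  have hsymH : ∀ c : ℝ, ∫ z in Iic (-c), z ^ 2 * f z = ∫ z in Ioi c, z ^ 2 * f z := by
    intro c
    have h := integral_comp_neg_Iic (-c) (fun x => x ^ 2 * f x)
    simp only [hf_symm, neg_neg, neg_sq] at h
    exact h
  have hF0 : ∫ z in Iic (0:ℝ), f z = 1/2 := by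
    have h1 := intervalIntegral.integral_Iic_add_Ioi (b := (0:ℝ))
      hf_int.integrableOn hf_int.integrableOn
    have h2 := hsymF 0
    rw [neg_zero] at h2
    rw [hf_total] at h1
    linarith
  have hT1 : ∫ z, z * f z = 0 := by
    have h1 := intervalIntegral.integral_Iic_add_Ioi (b := (0:ℝ))
      hzf_int.integrableOn hzf_int.integrableOn
    have h2 := hsymG 0
    rw [neg_zero] at h2
    linarith
  have hH0 : ∫ z in Iic (0:ℝ), z ^ 2 * f z = ∫ z in Ioi (0:ℝ), z ^ 2 * f z := by
    have := hsymH 0; rwa [neg_zero] at this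
  have hT2 : ∫ z, z ^ 2 * f z = 2 * ∫ z in Ioi (0:ℝ), z ^ 2 * f z := by
    have h1 := intervalIntegral.integral_Iic_add_Ioi (b := (0:ℝ))
      hmom.integrableOn hmom.integrableOn
    linarith
  -- properties of L
  have hLmeas : Measurable L := by
    have : L = fun z => if 0 ≤ z then k₁ * z else -k₂ * z := funext hL
    rw [this]
    exact Measurable.ite (measurableSet_le measurable_const measurable_id)
      (measurable_id.const_mul k₁) (measurable_id.const_mul (-k₂))
  have hLabs : ∀ w, |L w| ≤ (k₁ + k₂) * |w| := by
    intro w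
    rw [hL]
    split_ifs with h
    · rw [abs_mul, abs_of_pos hk₁]
      nlinarith [abs_nonneg w]
    · rw [abs_mul, abs_neg, abs_of_pos hk₂]
      nlinarith [abs_nonneg w]
  have hLsq : ∀ w, (L w) ^ 2 ≤ (k₁ + k₂) ^ 2 * w ^ 2 := by
    intro w
    have h := hLabs w
    have h2 := mul_le_mul h h (abs_nonneg (L w))
      (mul_nonneg (by linarith) (abs_nonneg w))
    nlinarith [sq_abs (L w), sq_abs w]
  have hg1 : Measurable fun z : ℝ => L (z + C) := hLmeas.comp (measurable_id.add_const C)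
  have hg2 : Measurable fun z : ℝ => (L (z + C)) ^ 2 := hg1.pow_const 2
  -- integrability of the composite integrands
  have habs : Integrable (fun z => |z| * f z) := by
    refine hzf_int.abs.congr (Filter.Eventually.of_forall fun z => ?_)
    simp only [abs_mul, abs_of_nonneg (hf_nonneg z)]
  have hLf_int : Integrable (fun z => L (z + C) * f z) := by
    refine ((habs.const_mul (k₁ + k₂)).add
      (hf_int.const_mul ((k₁ + k₂) * |C|))).mono'
      ((hg1.mul hf_meas).aestronglyMeasurable) ?_
    refine Filter.Eventually.of_forall fun z => ?_
    have h1 : |L (z + C)| ≤ (k₁ + k₂) * (|z| + |C|) := by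
      refine le_trans (hLabs (z + C)) ?_
      have := abs_add_le z C
      nlinarith
    have h2 : ‖L (z + C) * f z‖ = |L (z + C)| * f z := by
      rw [Real.norm_eq_abs, abs_mul, abs_of_nonneg (hf_nonneg z)]
    simp only [Pi.add_apply, h2]
    nlinarith [mul_le_mul_of_nonneg_right h1 (hf_nonneg z)]
  have hsqf_int : Integrable (fun z => (L (z + C)) ^ 2 * f z) := by
    have hquad : Integrable (fun z => z ^ 2 * f z + (2 * C) * (z * f z) + C ^ 2 * f z) :=
      (hmom.add (hzf_int.const_mul (2 * C))).add (hf_int.const_mul (C ^ 2))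
    refine (hquad.const_mul ((k₁ + k₂) ^ 2)).mono'
      ((hg2.mul hf_meas).aestronglyMeasurable) ?_
    refine Filter.Eventually.of_forall fun z => ?_
    have h1 := mul_le_mul_of_nonneg_right (hLsq (z + C)) (hf_nonneg z)
    have h2 : ‖(L (z + C)) ^ 2 * f z‖ = (L (z + C)) ^ 2 * f z := by
      rw [Real.norm_eq_abs, abs_of_nonneg (mul_nonneg (sq_nonneg _) (hf_nonneg z))]
    rw [h2]
    nlinarith
  -- pointwise forms on the two half-lines
  have eIic1 : ∀ z ∈ Iic (-C), L (z + C) * f z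
      = -k₂ * (z * f z) + (-k₂ * C) * f z := by
    intro z hz
    simp only [mem_Iic] at hz
    rw [hL]
    split_ifs with h
    · have hz0 : z = -C := by linarith
      rw [hz0]; ring
    · ring
  have eIoi1 : ∀ z ∈ Ioi (-C), L (z + C) * f z
      = k₁ * (z * f z) + (k₁ * C) * f z := by
    intro z hz
    simp only [mem_Ioi] at hz
    rw [hL, if_pos (by linarith)]
    ring
  have eIic2 : ∀ z ∈ Iic (-C), (L (z + C)) ^ 2 * f z
      = k₂ ^ 2 * (z ^ 2 * f z) + (2 * C * k₂ ^ 2) * (z * f z) + (C ^ 2 * k₂ ^ 2) * f z := by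
    intro z hz
    simp only [mem_Iic] at hz
    rw [hL]
    split_ifs with h
    · have hz0 : z = -C := by linarith
      rw [hz0]; ring
    · ring
  have eIoi2 : ∀ z ∈ Ioi (-C), (L (z + C)) ^ 2 * f z
      = k₁ ^ 2 * (z ^ 2 * f z) + (2 * C * k₁ ^ 2) * (z * f z) + (C ^ 2 * k₁ ^ 2) * f z := by
    intro z hz
    simp only [mem_Ioi] at hz
    rw [hL, if_pos (by linarith)]
    ring
  -- values of the half-line integrals
  have hIic1 : ∫ z in Iic (-C), L (z + C) * f z
      = -k₂ * (∫ z in Iic (-C), z * f z) + (-k₂ * C) * (∫ z in Iic (-C), f z) := by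
    rw [setIntegral_congr_fun measurableSet_Iic eIic1]
    exact lin2_aux hzf_int.integrableOn hf_int.integrableOn (-k₂) (-k₂ * C)
  have hIoi1 : ∫ z in Ioi (-C), L (z + C) * f z
      = k₁ * (∫ z in Ioi (-C), z * f z) + (k₁ * C) * (∫ z in Ioi (-C), f z) := by
    rw [setIntegral_congr_fun measurableSet_Ioi eIoi1]
    exact lin2_aux hzf_int.integrableOn hf_int.integrableOn k₁ (k₁ * C)
  have hIic2 : ∫ z in Iic (-C), (L (z + C)) ^ 2 * f z
      = k₂ ^ 2 * (∫ z in Iic (-C), z ^ 2 * f z)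
        + (2 * C * k₂ ^ 2) * (∫ z in Iic (-C), z * f z)
        + (C ^ 2 * k₂ ^ 2) * (∫ z in Iic (-C), f z) := by
    rw [setIntegral_congr_fun measurableSet_Iic eIic2]
    exact lin3_aux hmom.integrableOn hzf_int.integrableOn hf_int.integrableOn
      (k₂ ^ 2) (2 * C * k₂ ^ 2) (C ^ 2 * k₂ ^ 2)
  have hIoi2 : ∫ z in Ioi (-C), (L (z + C)) ^ 2 * f z
      = k₁ ^ 2 * (∫ z in Ioi (-C), z ^ 2 * f z)
        + (2 * C * k₁ ^ 2) * (∫ z in Ioi (-C), z * f z)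
        + (C ^ 2 * k₁ ^ 2) * (∫ z in Ioi (-C), f z) := by
    rw [setIntegral_congr_fun measurableSet_Ioi eIoi2]
    exact lin3_aux hmom.integrableOn hzf_int.integrableOn hf_int.integrableOn
      (k₁ ^ 2) (2 * C * k₁ ^ 2) (C ^ 2 * k₁ ^ 2)
  -- splittings of the full-line integrals
  have hsplit1 : ∫ z, L (z + C) * f z
      = (∫ z in Iic (-C), L (z + C) * f z) + ∫ z in Ioi (-C), L (z + C) * f z :=
    (intervalIntegral.integral_Iic_add_Ioi hLf_int.integrableOn hLf_int.integrableOn).symm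
  have hsplit2 : ∫ z, (L (z + C)) ^ 2 * f z
      = (∫ z in Iic (-C), (L (z + C)) ^ 2 * f z) + ∫ z in Ioi (-C), (L (z + C)) ^ 2 * f z :=
    (intervalIntegral.integral_Iic_add_Ioi hsqf_int.integrableOn hsqf_int.integrableOn).symm
  have hFs := intervalIntegral.integral_Iic_add_Ioi (b := -C)
    hf_int.integrableOn hf_int.integrableOn
  have hGs := intervalIntegral.integral_Iic_add_Ioi (b := -C)
    hzf_int.integrableOn hzf_int.integrableOn
  have hHs := intervalIntegral.integral_Iic_add_Ioi (b := -C)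
    hmom.integrableOn hmom.integrableOn
  rw [hf_total] at hFs
  rw [hT1] at hGs
  rw [hT2] at hHs
  -- moments of the loss under μ
  have hE1 : ∫ ω, L (Z ω + C) ∂μ = ∫ z, L (z + C) * f z := transfer _ hg1
  have hE2 : ∫ ω, (L (Z ω + C)) ^ 2 ∂μ = ∫ z, (L (z + C)) ^ 2 * f z := transfer _ hg2
  have hX2int : Integrable (fun ω => (L (Z ω + C)) ^ 2) μ := transferInt _ hg2 hsqf_int
  have hmem : MemLp (fun ω => L (Z ω + C)) 2 μ :=
    (memLp_two_iff_integrable_sq (hg1.comp hZ).aestronglyMeasurable).2 hX2int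
  rw [variance_eq_sub hmem]
  simp only [Pi.pow_apply]
  rw [hE2, hE1, hsplit1, hsplit2, hIic1, hIoi1, hIic2, hIoi2]
  -- now everything is expressed through six half-line integrals
  rcases le_or_gt 0 C with hC0 | hC0
  · -- case 0 ≤ C
    rw [if_pos hC0, abs_of_nonneg hC0] at hC
    rw [abs_of_nonneg hC0]
    have h2f := intervalIntegral.integral_Iic_sub_Iic (a := (0:ℝ)) (b := C)
      hf_int.integrableOn hf_int.integrableOn
    have h3f := intervalIntegral.integral_Iic_add_Ioi (b := C)
      hf_int.integrableOn hf_int.integrableOn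
    rw [hf_total] at h3f
    rw [hF0] at h2f
    have vIic_f : ∫ z in Iic (-C), f z = 1/2 - ∫ z in (0:ℝ)..C, f z := by
      have h1 := hsymF C
      linarith
    have vIoi_f : ∫ z in Ioi (-C), f z = 1/2 + ∫ z in (0:ℝ)..C, f z := by linarith
    have vIic_g : ∫ z in Iic (-C), z * f z = -∫ z in Ioi C, z * f z := hsymG C
    have vIoi_g : ∫ z in Ioi (-C), z * f z = ∫ z in Ioi C, z * f z := by
      have := hsymG C
      linarith
    have h2h := intervalIntegral.integral_Iic_sub_Iic (a := (0:ℝ)) (b := C)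
      hmom.integrableOn hmom.integrableOn
    have h3h := intervalIntegral.integral_Iic_add_Ioi (b := C)
      hmom.integrableOn hmom.integrableOn
    rw [hT2] at h3h
    have vIic_h : ∫ z in Iic (-C), z ^ 2 * f z
        = (∫ z in Ioi (0:ℝ), z ^ 2 * f z) - ∫ z in (0:ℝ)..C, z ^ 2 * f z := by
      have h1 := hsymH C
      linarith
    have vIoi_h : ∫ z in Ioi (-C), z ^ 2 * f z
        = (∫ z in Ioi (0:ℝ), z ^ 2 * f z) + ∫ z in (0:ℝ)..C, z ^ 2 * f z := by linarith
    rw [vIic_f, vIoi_f, vIic_g, vIoi_g, vIic_h, vIoi_h]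
    set F := ∫ z in (0:ℝ)..C, f z with hFdef
    set Q := ∫ z in (0:ℝ)..C, z ^ 2 * f z with hQdef
    set S := ∫ z in Ioi (0:ℝ), z ^ 2 * f z with hSdef
    set M := ∫ z in Ioi C, z * f z with hMdef
    obtain ⟨K, hK⟩ : ∃ K, K = k₁ + k₂ := ⟨_, rfl⟩
    obtain ⟨D, hD⟩ : ∃ D, D = k₁ - k₂ := ⟨_, rfl⟩
    have hk1 : k₁ = (K + D) / 2 := by rw [hK, hD]; ring
    have hk2 : k₂ = (K - D) / 2 := by rw [hK, hD]; ring
    have hDval : D = -2 * K * ∫ z in (0:ℝ)..C, f z := by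
      rw [hD, hK]; linear_combination 2 * hC
    rw [hk1, hk2, hDval]
    ring
  · -- case C < 0
    rw [if_neg (not_le.2 hC0), abs_of_neg hC0] at hC
    rw [abs_of_neg hC0]
    have h2f := intervalIntegral.integral_Iic_sub_Iic (a := (0:ℝ)) (b := -C)
      hf_int.integrableOn hf_int.integrableOn
    rw [hF0] at h2f
    have vIic_f : ∫ z in Iic (-C), f z = 1/2 + ∫ z in (0:ℝ)..(-C), f z := by linarith
    have vIoi_f : ∫ z in Ioi (-C), f z = 1/2 - ∫ z in (0:ℝ)..(-C), f z := by linarith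
    have vIic_g : ∫ z in Iic (-C), z * f z = -∫ z in Ioi (-C), z * f z := by linarith
    have h2h := intervalIntegral.integral_Iic_sub_Iic (a := (0:ℝ)) (b := -C)
      hmom.integrableOn hmom.integrableOn
    have vIic_h : ∫ z in Iic (-C), z ^ 2 * f z
        = (∫ z in Ioi (0:ℝ), z ^ 2 * f z) + ∫ z in (0:ℝ)..(-C), z ^ 2 * f z := by linarith
    have vIoi_h : ∫ z in Ioi (-C), z ^ 2 * f z
        = (∫ z in Ioi (0:ℝ), z ^ 2 * f z) - ∫ z in (0:ℝ)..(-C), z ^ 2 * f z := by linarith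
    rw [vIic_f, vIoi_f, vIic_g, vIic_h, vIoi_h]
    set F := ∫ z in (0:ℝ)..(-C), f z with hFdef
    set Q := ∫ z in (0:ℝ)..(-C), z ^ 2 * f z with hQdef
    set S := ∫ z in Ioi (0:ℝ), z ^ 2 * f z with hSdef
    set M := ∫ z in Ioi (-C), z * f z with hMdef
    obtain ⟨K, hK⟩ : ∃ K, K = k₁ + k₂ := ⟨_, rfl⟩
    obtain ⟨D, hD⟩ : ∃ D, D = k₁ - k₂ := ⟨_, rfl⟩
    have hk1 : k₁ = (K + D) / 2 := by rw [hK, hD]; ring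
    have hk2 : k₂ = (K - D) / 2 := by rw [hK, hD]; ring
    have hDval : D = 2 * K * ∫ z in (0:ℝ)..(-C), f z := by
      rw [hD, hK]; linear_combination 2 * hC
    rw [hk1, hk2, hDval]
    ring
end

section
/- Define β(x) = −(∫₀^∞ z f(z) dz)² + 2(∫₀ˣ f(z) dz)(∫₀ˣ z² f(z) dz) + 4x(∫₀ˣ f(z) dz)(∫ₓ^∞ z f(z) dz) − x²/4 + (∫ₓ^∞ z f(z) dz)² + x²(∫₀ˣ f(z) dz)². Let C be a real number satisfying (k₁ − k₂)/2 + sgn(C)(k₁ + k₂) ∫₀^{|C|} f(z) dz = 0, where sgn(c) = 1 for c ≥ 0 and sgn(c) = −1 for c < 0. Then Var[L(Z)] − Var[L(Z + C)] = (k₁ + k₂)² β(|C|). -/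
open MeasureTheory ProbabilityTheory

lemma aux_split {g : ℝ → ℝ} (hg : Integrable g) (a b : ℝ) :
    ∫ z in Set.Ioi a, g z = (∫ z in a..b, g z) + ∫ z in Set.Ioi b, g z := by
  have h1 := intervalIntegral.integral_Iic_add_Ioi (μ := volume) (b := a) hg.integrableOn hg.integrableOn
  have h2 := intervalIntegral.integral_Iic_add_Ioi (μ := volume) (b := b) hg.integrableOn hg.integrableOn
  have h3 := intervalIntegral.integral_Iic_sub_Iic (μ := volume) (a := a) (b := b)
    hg.integrableOn hg.integrableOn
  linarith

lemma aux_Iic {g : ℝ → ℝ} (hg : Integrable g) (a : ℝ) :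
    ∫ z in Set.Iic a, g z = (∫ z, g z) - ∫ z in Set.Ioi a, g z := by
  have h1 := intervalIntegral.integral_Iic_add_Ioi (μ := volume) (b := a) hg.integrableOn hg.integrableOn
  linarith

lemma aux_Iic_even {g : ℝ → ℝ} (hgs : ∀ x, g (-x) = g x) :
    ∫ z in Set.Iic (0:ℝ), g z = ∫ z in Set.Ioi (0:ℝ), g z := by
  have h := integral_comp_neg_Iic (0:ℝ) g
  simp only [hgs, neg_zero] at h
  exact h

lemma aux_Iic_odd {g : ℝ → ℝ} (hgs : ∀ x, g (-x) = -g x) :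
    ∫ z in Set.Iic (0:ℝ), g z = -∫ z in Set.Ioi (0:ℝ), g z := by
  have h := integral_comp_neg_Iic (0:ℝ) g
  simp only [hgs, neg_zero, integral_neg] at h
  linarith

set_option maxHeartbeats 1000000 in
/-- With `β` as in the paper and `C` satisfying
`(k₁ − k₂)/2 + sgn(C)(k₁ + k₂) ∫₀^{|C|} f = 0`, one has
`Var[L(Z)] − Var[L(Z + C)] = (k₁ + k₂)² β(|C|)`. -/
theorem variance_difference_eq_beta
    {Ω : Type*} [MeasurableSpace Ω] (μ : Measure Ω) [IsProbabilityMeasure μ]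
    (f : ℝ → ℝ) (hf_meas : Measurable f) (hf_nonneg : ∀ x, 0 ≤ f x)
    (hf_total : ∫ z, f z = 1)
    (hf_symm : ∀ x, f (-x) = f x)
    (hf_mono : ∀ x y : ℝ, 0 ≤ x → x ≤ y → f y ≤ f x)
    (Z : Ω → ℝ) (hZ : Measurable Z)
    (hdens : Measure.map Z μ = volume.withDensity (fun z => ENNReal.ofReal (f z)))
    (hmom : Integrable (fun z => z ^ 2 * f z))
    (k₁ k₂ : ℝ) (hk₁ : 0 < k₁) (hk₂ : 0 < k₂)
    (L : ℝ → ℝ) (hL : ∀ z, L z = if 0 ≤ z then k₁ * z else -k₂ * z)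
    (β : ℝ → ℝ)
    (hβ : ∀ x : ℝ, β x
        = -(∫ z in Set.Ioi (0:ℝ), z * f z) ^ 2
          + 2 * (∫ z in (0:ℝ)..x, f z) * (∫ z in (0:ℝ)..x, z ^ 2 * f z)
          + 4 * x * (∫ z in (0:ℝ)..x, f z) * (∫ z in Set.Ioi x, z * f z)
          - x ^ 2 / 4
          + (∫ z in Set.Ioi x, z * f z) ^ 2
          + x ^ 2 * (∫ z in (0:ℝ)..x, f z) ^ 2)
    (C : ℝ)
    (hC : (k₁ - k₂) / 2
        + (if 0 ≤ C then (1:ℝ) else -1) * (k₁ + k₂) * (∫ z in (0:ℝ)..|C|, f z) = 0) :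
    variance (fun ω => L (Z ω)) μ - variance (fun ω => L (Z ω + C)) μ
      = (k₁ + k₂) ^ 2 * β |C| := by
  have hβ' := hβ |C|
  clear hβ
  -- basic integrability
  have hfi : Integrable f := by
    by_contra h
    rw [integral_undef h] at hf_total
    norm_num at hf_total
  have hzfi : Integrable (fun z => z * f z) := by
    refine (hfi.add hmom).mono ((measurable_id.mul hf_meas).aestronglyMeasurable) ?_
    filter_upwards with z
    have h1 : |z * f z| = |z| * f z := by
      rw [abs_mul, abs_of_nonneg (hf_nonneg z)]
    have h2 : 0 ≤ f z + z ^ 2 * f z := by nlinarith [hf_nonneg z, sq_nonneg z]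
    simp only [Real.norm_eq_abs, h1, abs_of_nonneg h2, Pi.add_apply]
    nlinarith [hf_nonneg z, abs_nonneg z, sq_abs z, sq_nonneg (|z| - 1)]
  have habsfi : Integrable (fun z => |z| * f z) := by
    refine hzfi.abs.congr ?_
    filter_upwards with z
    rw [abs_mul, abs_of_nonneg (hf_nonneg z)]
  -- measurability of L and bound
  have hLfun : L = fun z => if 0 ≤ z then k₁ * z else -k₂ * z := funext hL
  have hLmeas : Measurable L := by
    rw [hLfun]
    exact Measurable.ite (measurableSet_le measurable_const measurable_id)
      (measurable_const.mul measurable_id) (measurable_const.mul measurable_id)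
  have hLbound : ∀ w, |L w| ≤ (k₁ + k₂) * |w| := by
    intro w
    rw [hL w]
    split_ifs with h
    · rw [abs_mul, abs_of_pos hk₁]
      nlinarith [abs_nonneg w]
    · rw [abs_mul, abs_neg, abs_of_pos hk₂]
      nlinarith [abs_nonneg w]
  -- pushforward machinery
  have hmap : ∀ g : ℝ → ℝ, Measurable g → ∫ ω, g (Z ω) ∂μ = ∫ z, g z * f z := by
    intro g hg
    rw [← integral_map hZ.aemeasurable hg.aestronglyMeasurable, hdens]
    rw [show (fun z => ENNReal.ofReal (f z)) = (fun z => ((f z).toNNReal : ENNReal)) from rfl]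
    rw [integral_withDensity_eq_integral_smul hf_meas.real_toNNReal g]
    congr 1
    funext z
    simp [NNReal.smul_def, Real.coe_toNNReal _ (hf_nonneg z), mul_comm]
  have hmapInt : ∀ g : ℝ → ℝ, Measurable g → Integrable (fun z => g z * f z) →
      Integrable (fun ω => g (Z ω)) μ := by
    intro g hg hgi
    have h1 : Integrable g (Measure.map Z μ) := by
      rw [hdens]
      rw [show (fun z => ENNReal.ofReal (f z)) = (fun z => ((f z).toNNReal : ENNReal)) from rfl]
      rw [integrable_withDensity_iff_integrable_smul hf_meas.real_toNNReal]
      refine hgi.congr ?_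
      filter_upwards with z
      simp [NNReal.smul_def, Real.coe_toNNReal _ (hf_nonneg z), mul_comm]
    exact (integrable_map_measure hg.aestronglyMeasurable hZ.aemeasurable).mp h1
  -- integrability of the shifted loss integrands
  have hIL : ∀ D : ℝ, Integrable (fun z => L (z + D) * f z) := by
    intro D
    refine Integrable.mono' ((habsfi.const_mul (k₁ + k₂)).add (hfi.const_mul ((k₁ + k₂) * |D|)))
      (((hLmeas.comp (measurable_id.add_const D)).mul hf_meas).aestronglyMeasurable) ?_
    filter_upwards with z
    have h1 : |L (z + D)| ≤ (k₁ + k₂) * (|z| + |D|) := by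
      calc |L (z + D)| ≤ (k₁ + k₂) * |z + D| := hLbound _
        _ ≤ (k₁ + k₂) * (|z| + |D|) := by
            have := abs_add_le z D
            nlinarith
    have h2 : ‖L (z + D) * f z‖ = |L (z + D)| * f z := by
      rw [Real.norm_eq_abs, abs_mul, abs_of_nonneg (hf_nonneg z)]
    rw [h2]
    simp only [Pi.add_apply]
    have := mul_le_mul_of_nonneg_right h1 (hf_nonneg z)
    nlinarith [hf_nonneg z]
  have hIL2 : ∀ D : ℝ, Integrable (fun z => (L (z + D)) ^ 2 * f z) := by
    intro D
    refine Integrable.mono' ((hmom.const_mul (2 * (k₁ + k₂) ^ 2)).add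
      (hfi.const_mul (2 * (k₁ + k₂) ^ 2 * D ^ 2)))
      ((((hLmeas.comp (measurable_id.add_const D)).pow_const 2).mul hf_meas).aestronglyMeasurable) ?_
    filter_upwards with z
    have h1 : (L (z + D)) ^ 2 ≤ (k₁ + k₂) ^ 2 * (2 * z ^ 2 + 2 * D ^ 2) := by
      have hb := hLbound (z + D)
      have h0 : 0 ≤ |L (z + D)| := abs_nonneg _
      nlinarith [sq_abs (L (z + D)), sq_abs (z + D), sq_nonneg (z - D), sq_nonneg (z + D),
        sq_nonneg (k₁ + k₂)]
    have h2 : ‖(L (z + D)) ^ 2 * f z‖ = (L (z + D)) ^ 2 * f z := by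
      rw [Real.norm_eq_abs, abs_of_nonneg (mul_nonneg (sq_nonneg _) (hf_nonneg z))]
    rw [h2]
    simp only [Pi.add_apply]
    have := mul_le_mul_of_nonneg_right h1 (hf_nonneg z)
    nlinarith [hf_nonneg z]
  -- Memℒp
  have hmem : ∀ D : ℝ, MemLp (fun ω => L (Z ω + D)) 2 μ := by
    intro D
    have hme : Measurable fun ω => L (Z ω + D) := hLmeas.comp (hZ.add_const D)
    rw [memLp_two_iff_integrable_sq hme.aestronglyMeasurable]
    exact hmapInt (fun z => (L (z + D)) ^ 2)
      ((hLmeas.comp (measurable_id.add_const D)).pow_const 2) (hIL2 D)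
  have hLpos : ∀ w : ℝ, 0 ≤ w → L w = k₁ * w := fun w hw => by rw [hL, if_pos hw]
  have hLneg : ∀ w : ℝ, w ≤ 0 → L w = -k₂ * w := by
    intro w hw
    rw [hL]
    split_ifs with h
    · have hw0 : w = 0 := le_antisymm hw h
      simp [hw0]
    · rfl
  -- totals and halves
  have half : ∫ z in Set.Ioi (0:ℝ), f z = 1/2 := by
    have h1 := intervalIntegral.integral_Iic_add_Ioi (μ := volume) (b := (0:ℝ))
      hfi.integrableOn hfi.integrableOn
    rw [aux_Iic_even hf_symm, hf_total] at h1
    linarith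
  have mtot : ∫ z, z * f z = 0 := by
    have h1 := intervalIntegral.integral_Iic_add_Ioi (μ := volume) (b := (0:ℝ))
      hzfi.integrableOn hzfi.integrableOn
    rw [aux_Iic_odd (g := fun z => z * f z) (fun x => by simp only [hf_symm]; ring)] at h1
    linarith
  have tot2 : ∫ z, z ^ 2 * f z = 2 * ∫ z in Set.Ioi (0:ℝ), z ^ 2 * f z := by
    have h1 := intervalIntegral.integral_Iic_add_Ioi (μ := volume) (b := (0:ℝ))
      hmom.integrableOn hmom.integrableOn
    rw [aux_Iic_even (g := fun z => z ^ 2 * f z) (fun x => by simp only [hf_symm]; ring)] at h1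
    linarith
  -- interval reflections
  have hint0C_even : ∀ g : ℝ → ℝ, (∀ x, g (-x) = g x) →
      ∫ z in (0:ℝ)..C, g z = (if 0 ≤ C then (1:ℝ) else -1) * ∫ z in (0:ℝ)..|C|, g z := by
    intro g hg
    split_ifs with h
    · rw [abs_of_nonneg h, one_mul]
    · rw [abs_of_neg (lt_of_not_ge h)]
      have h2 : (∫ x in (0:ℝ)..(-C), g (-x)) = ∫ x in (C:ℝ)..0, g x := by
        simpa using intervalIntegral.integral_comp_neg (a := 0) (b := -C) g
      simp only [hg] at h2
      have h3 := intervalIntegral.integral_symm (μ := volume) (f := g) (a := 0) (b := C)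
      linarith
  have hint0C_odd : ∀ g : ℝ → ℝ, (∀ x, g (-x) = -g x) →
      ∫ z in (0:ℝ)..C, g z = ∫ z in (0:ℝ)..|C|, g z := by
    intro g hg
    rcases le_or_gt 0 C with h | h
    · rw [abs_of_nonneg h]
    · rw [abs_of_neg h]
      have h2 : (∫ x in (0:ℝ)..(-C), g (-x)) = ∫ x in (C:ℝ)..0, g x := by
        simpa using intervalIntegral.integral_comp_neg (a := 0) (b := -C) g
      simp only [hg, intervalIntegral.integral_neg] at h2
      have h3 := intervalIntegral.integral_symm (μ := volume) (f := g) (a := 0) (b := C)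
      linarith
  have hmid : ∀ g : ℝ → ℝ, Integrable g →
      ∫ z in Set.Ioi (-C), g z = (∫ z in (0:ℝ)..C, g (-z)) + ∫ z in Set.Ioi (0:ℝ), g z := by
    intro g hg
    rw [aux_split hg (-C) 0]
    congr 1
    have h2 : (∫ x in (0:ℝ)..C, g (-x)) = ∫ x in (-C)..(0:ℝ), g x := by
      simpa using intervalIntegral.integral_comp_neg (a := 0) (b := C) g
    rw [h2]
  -- the four moments over Ioi (-C) and Iic (-C)
  have hm0c : ∫ z in (0:ℝ)..|C|, z * f z
      = (∫ z in Set.Ioi (0:ℝ), z * f z) - ∫ z in Set.Ioi |C|, z * f z := by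
    have := aux_split hzfi 0 |C|
    linarith
  have haf : ∫ z in Set.Ioi (-C), f z
      = (if 0 ≤ C then (1:ℝ) else -1) * (∫ z in (0:ℝ)..|C|, f z) + 1/2 := by
    rw [hmid f hfi]
    simp only [hf_symm]
    rw [hint0C_even f hf_symm, half]
  have hazf : ∫ z in Set.Ioi (-C), z * f z = ∫ z in Set.Ioi |C|, z * f z := by
    rw [hmid _ hzfi]
    simp only [hf_symm, neg_mul, intervalIntegral.integral_neg]
    rw [hint0C_odd (fun z => z * f z) (fun x => by simp only [hf_symm]; ring), hm0c]
    ring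
  have haz2f : ∫ z in Set.Ioi (-C), z ^ 2 * f z
      = (if 0 ≤ C then (1:ℝ) else -1) * (∫ z in (0:ℝ)..|C|, z ^ 2 * f z)
        + ∫ z in Set.Ioi (0:ℝ), z ^ 2 * f z := by
    rw [hmid _ hmom]
    simp only [hf_symm, neg_sq]
    rw [hint0C_even (fun z => z ^ 2 * f z) (fun x => by simp only [hf_symm]; ring)]
  have hbf : ∫ z in Set.Iic (-C), f z
      = 1 - ((if 0 ≤ C then (1:ℝ) else -1) * (∫ z in (0:ℝ)..|C|, f z) + 1/2) := by
    rw [aux_Iic hfi, hf_total, haf]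
  have hbzf : ∫ z in Set.Iic (-C), z * f z = - ∫ z in Set.Ioi |C|, z * f z := by
    rw [aux_Iic hzfi, mtot, hazf]
    ring
  have hbz2f : ∫ z in Set.Iic (-C), z ^ 2 * f z
      = 2 * (∫ z in Set.Ioi (0:ℝ), z ^ 2 * f z)
        - ((if 0 ≤ C then (1:ℝ) else -1) * (∫ z in (0:ℝ)..|C|, z ^ 2 * f z)
          + ∫ z in Set.Ioi (0:ℝ), z ^ 2 * f z) := by
    rw [aux_Iic hmom, tot2, haz2f]
  -- abbreviations
  set c := |C| with hc_def
  set A := ∫ z in (0:ℝ)..c, f z with hA_def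
  set S := ∫ z in (0:ℝ)..c, z ^ 2 * f z with hS_def
  set T := ∫ z in Set.Ioi c, z * f z with hT_def
  set m := ∫ z in Set.Ioi (0:ℝ), z * f z with hm_def
  set σ2 := ∫ z in Set.Ioi (0:ℝ), z ^ 2 * f z with hσ_def
  set s : ℝ := if 0 ≤ C then (1:ℝ) else -1 with hs_def
  -- expectations at C = 0
  have hIL0 : Integrable (fun z => L z * f z) := by simpa using hIL 0
  have hIL20 : Integrable (fun z => (L z) ^ 2 * f z) := by simpa using hIL2 0
  have hE1 : ∫ z, L z * f z = (k₁ + k₂) * m := by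
    have hsplit := intervalIntegral.integral_Iic_add_Ioi (μ := volume) (b := (0:ℝ))
      hIL0.integrableOn hIL0.integrableOn
    have hIoi : ∫ z in Set.Ioi (0:ℝ), L z * f z = k₁ * m := by
      rw [hm_def, ← integral_const_mul]
      exact setIntegral_congr_fun measurableSet_Ioi
        (fun z hz => by rw [hLpos _ (le_of_lt (Set.mem_Ioi.mp hz))]; ring)
    have hIic : ∫ z in Set.Iic (0:ℝ), L z * f z = k₂ * m := by
      have h1 : ∫ z in Set.Iic (0:ℝ), L z * f z = -k₂ * ∫ z in Set.Iic (0:ℝ), z * f z := by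
        rw [← integral_const_mul]
        exact setIntegral_congr_fun measurableSet_Iic
          (fun z hz => by rw [hLneg _ (Set.mem_Iic.mp hz)]; ring)
      rw [h1, aux_Iic_odd (g := fun z => z * f z) (fun x => by simp only [hf_symm]; ring)]
      rw [← hm_def]
      ring
    rw [← hsplit, hIoi, hIic]
    ring
  have hE2 : ∫ z, (L z) ^ 2 * f z = (k₁ ^ 2 + k₂ ^ 2) * σ2 := by
    have hsplit := intervalIntegral.integral_Iic_add_Ioi (μ := volume) (b := (0:ℝ))
      hIL20.integrableOn hIL20.integrableOn
    have hIoi : ∫ z in Set.Ioi (0:ℝ), (L z) ^ 2 * f z = k₁ ^ 2 * σ2 := by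
      rw [hσ_def, ← integral_const_mul]
      exact setIntegral_congr_fun measurableSet_Ioi
        (fun z hz => by rw [hLpos _ (le_of_lt (Set.mem_Ioi.mp hz))]; ring)
    have hIic : ∫ z in Set.Iic (0:ℝ), (L z) ^ 2 * f z = k₂ ^ 2 * σ2 := by
      have h1 : ∫ z in Set.Iic (0:ℝ), (L z) ^ 2 * f z
          = k₂ ^ 2 * ∫ z in Set.Iic (0:ℝ), z ^ 2 * f z := by
        rw [← integral_const_mul]
        exact setIntegral_congr_fun measurableSet_Iic
          (fun z hz => by rw [hLneg _ (Set.mem_Iic.mp hz)]; ring)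
      rw [h1, aux_Iic_even (g := fun z => z ^ 2 * f z) (fun x => by simp only [hf_symm]; ring)]
    rw [← hsplit, hIoi, hIic]
    ring
  -- expectations at shift C
  have hIoiL : ∫ z in Set.Ioi (-C), L (z + C) * f z
      = k₁ * (∫ z in Set.Ioi (-C), z * f z) + k₁ * C * (∫ z in Set.Ioi (-C), f z) := by
    rw [← integral_const_mul, ← integral_const_mul,
      ← integral_add ((hzfi.restrict).const_mul k₁) ((hfi.restrict).const_mul (k₁ * C))]
    refine setIntegral_congr_fun measurableSet_Ioi (fun z hz => ?_)
    rw [hLpos _ (by have := Set.mem_Ioi.mp hz; linarith)]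
    ring
  have hIicL : ∫ z in Set.Iic (-C), L (z + C) * f z
      = -k₂ * (∫ z in Set.Iic (-C), z * f z) + (-k₂ * C) * (∫ z in Set.Iic (-C), f z) := by
    rw [← integral_const_mul, ← integral_const_mul,
      ← integral_add ((hzfi.restrict).const_mul (-k₂)) ((hfi.restrict).const_mul (-k₂ * C))]
    refine setIntegral_congr_fun measurableSet_Iic (fun z hz => ?_)
    rw [hLneg _ (by have := Set.mem_Iic.mp hz; linarith)]
    ring
  have hE3 : ∫ z, L (z + C) * f z = (k₁ + k₂) * T + C * s * (k₁ + k₂) * A + C * (k₁ - k₂) / 2 := by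
    have hsplit := intervalIntegral.integral_Iic_add_Ioi (μ := volume) (b := -C)
      (hIL C).integrableOn (hIL C).integrableOn
    rw [← hsplit, hIoiL, hIicL, haf, hazf, hbf, hbzf]
    ring
  have hIoiL2 : ∫ z in Set.Ioi (-C), (L (z + C)) ^ 2 * f z
      = k₁ ^ 2 * (∫ z in Set.Ioi (-C), z ^ 2 * f z)
        + 2 * k₁ ^ 2 * C * (∫ z in Set.Ioi (-C), z * f z)
        + k₁ ^ 2 * C ^ 2 * (∫ z in Set.Ioi (-C), f z) := by
    have hsum_k₁ : Integrable (fun z => k₁ ^ 2 * (z ^ 2 * f z) + 2 * k₁ ^ 2 * C * (z * f z))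
        (volume.restrict (Set.Ioi (-C))) := by
      exact ((hmom.restrict).const_mul _).add ((hzfi.restrict).const_mul _)
    rw [← integral_const_mul, ← integral_const_mul, ← integral_const_mul,
      ← integral_add ((hmom.restrict).const_mul (k₁ ^ 2))
        ((hzfi.restrict).const_mul (2 * k₁ ^ 2 * C)),
      ← integral_add hsum_k₁ ((hfi.restrict).const_mul (k₁ ^ 2 * C ^ 2))]
    refine setIntegral_congr_fun measurableSet_Ioi (fun z hz => ?_)
    rw [hLpos _ (by have := Set.mem_Ioi.mp hz; linarith)]
    ring
  have hIicL2 : ∫ z in Set.Iic (-C), (L (z + C)) ^ 2 * f z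
      = k₂ ^ 2 * (∫ z in Set.Iic (-C), z ^ 2 * f z)
        + 2 * k₂ ^ 2 * C * (∫ z in Set.Iic (-C), z * f z)
        + k₂ ^ 2 * C ^ 2 * (∫ z in Set.Iic (-C), f z) := by
    have hsum_k₂ : Integrable (fun z => k₂ ^ 2 * (z ^ 2 * f z) + 2 * k₂ ^ 2 * C * (z * f z))
        (volume.restrict (Set.Iic (-C))) := by
      exact ((hmom.restrict).const_mul _).add ((hzfi.restrict).const_mul _)
    rw [← integral_const_mul, ← integral_const_mul, ← integral_const_mul,
      ← integral_add ((hmom.restrict).const_mul (k₂ ^ 2))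
        ((hzfi.restrict).const_mul (2 * k₂ ^ 2 * C)),
      ← integral_add hsum_k₂ ((hfi.restrict).const_mul (k₂ ^ 2 * C ^ 2))]
    refine setIntegral_congr_fun measurableSet_Iic (fun z hz => ?_)
    rw [hLneg _ (by have := Set.mem_Iic.mp hz; linarith)]
    ring
  have hE4 : ∫ z, (L (z + C)) ^ 2 * f z
      = k₁ ^ 2 * ((σ2 + s * S) + 2 * C * T + C ^ 2 * (s * A + 1/2))
        + k₂ ^ 2 * ((σ2 - s * S) - 2 * C * T + C ^ 2 * (1/2 - s * A)) := by
    have hsplit := intervalIntegral.integral_Iic_add_Ioi (μ := volume) (b := -C)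
      (hIL2 C).integrableOn (hIL2 C).integrableOn
    rw [← hsplit, hIoiL2, hIicL2, haf, hazf, haz2f, hbf, hbzf, hbz2f]
    ring
  -- variances
  have hV1 : variance (fun ω => L (Z ω)) μ = (k₁ ^ 2 + k₂ ^ 2) * σ2 - ((k₁ + k₂) * m) ^ 2 := by
    have hmem0 : MemLp (fun ω => L (Z ω)) 2 μ := by simpa using hmem 0
    rw [variance_eq_sub hmem0]
    simp only [Pi.pow_apply]
    rw [show (∫ ω, L (Z ω) ^ 2 ∂μ) = ∫ z, (L z) ^ 2 * f z from
        hmap (fun z => (L z) ^ 2) (hLmeas.pow_const 2),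
      show (∫ ω, L (Z ω) ∂μ) = ∫ z, L z * f z from hmap L hLmeas, hE1, hE2]
  have hV2 : variance (fun ω => L (Z ω + C)) μ
      = (k₁ ^ 2 * ((σ2 + s * S) + 2 * C * T + C ^ 2 * (s * A + 1/2))
        + k₂ ^ 2 * ((σ2 - s * S) - 2 * C * T + C ^ 2 * (1/2 - s * A)))
        - ((k₁ + k₂) * T + C * s * (k₁ + k₂) * A + C * (k₁ - k₂) / 2) ^ 2 := by
    rw [variance_eq_sub (hmem C)]
    simp only [Pi.pow_apply]
    rw [show (∫ ω, L (Z ω + C) ^ 2 ∂μ) = ∫ z, (L (z + C)) ^ 2 * f z from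
        hmap (fun z => (L (z + C)) ^ 2) ((hLmeas.comp (measurable_id.add_const C)).pow_const 2),
      show (∫ ω, L (Z ω + C) ∂μ) = ∫ z, L (z + C) * f z from
        hmap (fun z => L (z + C)) (hLmeas.comp (measurable_id.add_const C)), hE3, hE4]
  rw [hV1, hV2, hβ']
  rcases le_or_gt 0 C with h | h
  · have hs1 : s = 1 := by rw [hs_def, if_pos h]
    have hcC : C = c := by rw [hc_def, abs_of_nonneg h]
    rw [hs1] at hC
    rw [hs1, hcC]
    linear_combination (2 * (-(k₁ + k₂) * (S + 2 * c * T) - (k₁ + k₂) * c ^ 2 * A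
      - c ^ 2 * ((k₁ - k₂) - 2 * (k₁ + k₂) * A) / 4)
      + 2 * c * T * (k₁ + k₂) + c ^ 2 * ((k₁ - k₂) + 2 * (k₁ + k₂) * A) / 2) * hC
  · have hs1 : s = -1 := by rw [hs_def, if_neg (not_le.mpr h)]
    have hcC : C = -c := by rw [hc_def, abs_of_neg h, neg_neg]
    rw [hs1] at hC
    rw [hs1, hcC]
    linear_combination (2 * ((k₁ + k₂) * (S + 2 * c * T) + (k₁ + k₂) * c ^ 2 * A
      - c ^ 2 * ((k₁ - k₂) + 2 * (k₁ + k₂) * A) / 4)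
      - 2 * c * T * (k₁ + k₂) + c ^ 2 * ((k₁ - k₂) - 2 * (k₁ + k₂) * A) / 2) * hC
end

section
/- Define β(x) = −(∫₀^∞ z f(z) dz)² + 2(∫₀ˣ f(z) dz)(∫₀ˣ z² f(z) dz) + 4x(∫₀ˣ f(z) dz)(∫ₓ^∞ z f(z) dz) − x²/4 + (∫ₓ^∞ z f(z) dz)² + x²(∫₀ˣ f(z) dz)². Then β(0) = 0, and for x ≥ 0 the derivative of β is β′(x) = 4(∫₀ˣ f(z) dz)(∫ₓ^∞ z f(z) dz) − x/2 + 2x(∫₀ˣ f(z) dz)² + 2f(x) ∫₀ˣ z² f(z) dz + 2x f(x) ∫ₓ^∞ z f(z) dz; consequently β(x) ≥ 0 for all x ≥ 0. -/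
open MeasureTheory Set

/-- Rearrangement-type inequality: for a nonneg function nonincreasing on `[x,∞)`,
`(∫_x^∞ f)² ≤ 2 f(x) ∫_x^∞ (z-x) f(z) dz`. -/
lemma key_Q (f : ℝ → ℝ) (hf_nonneg : ∀ x, 0 ≤ f x)
    (hf_mono : ∀ x y : ℝ, 0 ≤ x → x ≤ y → f y ≤ f x)
    (hint1 : Integrable f) (hint2 : Integrable (fun z => z * f z))
    (x : ℝ) (hx : 0 ≤ x) (hfx : 0 < f x) :
    (∫ z in Ioi x, f z) ^ 2
      ≤ 2 * f x * ((∫ z in Ioi x, z * f z) - x * ∫ z in Ioi x, f z) := by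
  set p := ∫ z in Ioi x, f z with hp
  set c := p / f x with hc
  have hp0 : 0 ≤ p := setIntegral_nonneg measurableSet_Ioi fun z _ => hf_nonneg z
  have hc0 : 0 ≤ c := div_nonneg hp0 hfx.le
  set g : ℝ → ℝ := (Ioc x (x + c)).indicator fun _ => f x with hg
  have hφ : IntegrableOn (fun z => (z - (x + c)) * f z) (Ioi x) := by
    have h1 : IntegrableOn (fun z => z * f z - (x + c) * f z) (Ioi x) :=
      hint2.integrableOn.sub (hint1.integrableOn.const_mul (x + c))
    exact h1.congr_fun (fun z _ => by ring) measurableSet_Ioi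
  have hψeq : (fun z => (z - (x + c)) * g z)
      = (Ioc x (x + c)).indicator fun z => (z - (x + c)) * f x := by
    funext z
    by_cases hz : z ∈ Ioc x (x + c)
    · simp [hg, Set.indicator_of_mem hz]
    · simp [hg, Set.indicator_of_notMem hz]
  have hψint : Integrable ((Ioc x (x + c)).indicator fun z => (z - (x + c)) * f x) :=
    (((continuous_id.sub continuous_const).mul continuous_const).integrableOn_Ioc).integrable_indicator
      measurableSet_Ioc
  have hψint' : IntegrableOn (fun z => (z - (x + c)) * g z) (Ioi x) := by
    rw [hψeq]; exact hψint.integrableOn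
  have h1 : 0 ≤ ∫ z in Ioi x, (z - (x + c)) * (f z - g z) := by
    refine setIntegral_nonneg measurableSet_Ioi ?_
    intro z hz
    have hxz : x < z := hz
    rcases le_or_gt z (x + c) with h2 | h2
    · have hmem : z ∈ Ioc x (x + c) := ⟨hxz, h2⟩
      have hgz : g z = f x := by simp [hg, Set.indicator_of_mem hmem]
      rw [hgz]
      have hfz : f z ≤ f x := hf_mono x z hx hxz.le
      nlinarith
    · have hnm : z ∉ Ioc x (x + c) := fun hm => absurd hm.2 h2.not_ge
      have hgz : g z = 0 := by simp [hg, Set.indicator_of_notMem hnm]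
      rw [hgz]
      have := hf_nonneg z
      nlinarith
  have hsub : ∫ z in Ioi x, (z - (x + c)) * (f z - g z)
      = (∫ z in Ioi x, (z - (x + c)) * f z) - ∫ z in Ioi x, (z - (x + c)) * g z := by
    simp_rw [mul_sub]
    exact integral_sub hφ hψint'
  have hA : ∫ z in Ioi x, (z - (x + c)) * f z
      = (∫ z in Ioi x, z * f z) - (x + c) * p := by
    have heq : ∀ z, (z - (x + c)) * f z = z * f z - (x + c) * f z := fun z => by ring
    simp_rw [heq]
    rw [integral_sub hint2.integrableOn (hint1.integrableOn.const_mul (x + c)),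
      MeasureTheory.integral_const_mul]
  have hB : ∫ z in Ioi x, (z - (x + c)) * g z = -(f x * c ^ 2 / 2) := by
    rw [show (fun z => (z - (x + c)) * g z)
        = (Ioc x (x + c)).indicator fun z => (z - (x + c)) * f x from hψeq]
    rw [setIntegral_indicator measurableSet_Ioc,
      Set.inter_eq_self_of_subset_right Ioc_subset_Ioi_self,
      ← intervalIntegral.integral_of_le (by linarith : x ≤ x + c)]
    have : ∫ z in x..(x + c), (z - (x + c)) * f x
        = ((∫ z in x..(x + c), z) - ∫ z in x..(x + c), (x + c)) * f x := by
      rw [← intervalIntegral.integral_sub intervalIntegral.intervalIntegrable_id intervalIntegrable_const,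
        intervalIntegral.integral_mul_const]
    rw [this, integral_id, intervalIntegral.integral_const]
    simp only [smul_eq_mul]
    ring
  have hcfx : c * f x = p := div_mul_cancel₀ p hfx.ne'
  rw [hsub, hA, hB] at h1
  nlinarith [mul_le_mul_of_nonneg_left h1 hfx.le, hcfx]

lemma aux_deriv (f : ℝ → ℝ) (hf_cont : Continuous f) (C x : ℝ) :
    HasDerivAt (fun u => -C ^ 2 + 2 * (∫ z in (0:ℝ)..u, f z) * (∫ z in (0:ℝ)..u, z ^ 2 * f z)
        + 4 * u * (∫ z in (0:ℝ)..u, f z) * (C - ∫ z in (0:ℝ)..u, z * f z)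
        - u ^ 2 / 4
        + (C - ∫ z in (0:ℝ)..u, z * f z) ^ 2
        + u ^ 2 * (∫ z in (0:ℝ)..u, f z) ^ 2)
      (4 * (∫ z in (0:ℝ)..x, f z) * (C - ∫ z in (0:ℝ)..x, z * f z)
        - x / 2 + 2 * x * (∫ z in (0:ℝ)..x, f z) ^ 2
        + 2 * f x * (∫ z in (0:ℝ)..x, z ^ 2 * f z)
        + 2 * x * f x * (C - ∫ z in (0:ℝ)..x, z * f z)) x := by
  have hF : HasDerivAt (fun u => ∫ z in (0:ℝ)..u, f z) (f x) x :=
    intervalIntegral.integral_hasDerivAt_right (hf_cont.intervalIntegrable _ _)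
      (hf_cont.stronglyMeasurableAtFilter _ _) hf_cont.continuousAt
  have hGc : Continuous fun z : ℝ => z ^ 2 * f z := (continuous_pow 2).mul hf_cont
  have hIc : Continuous fun z : ℝ => z * f z := continuous_id.mul hf_cont
  have hG : HasDerivAt (fun u => ∫ z in (0:ℝ)..u, z ^ 2 * f z) (x ^ 2 * f x) x :=
    intervalIntegral.integral_hasDerivAt_right (hGc.intervalIntegrable _ _)
      (hGc.stronglyMeasurableAtFilter _ _) hGc.continuousAt
  have hI : HasDerivAt (fun u => ∫ z in (0:ℝ)..u, z * f z) (x * f x) x :=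
    intervalIntegral.integral_hasDerivAt_right (hIc.intervalIntegrable _ _)
      (hIc.stronglyMeasurableAtFilter _ _) hIc.continuousAt
  have h3 : HasDerivAt (fun u => C - ∫ z in (0:ℝ)..u, z * f z) (0 - x * f x) x :=
    (hasDerivAt_const x C).sub hI
  have hu : HasDerivAt (fun u : ℝ => u) 1 x := hasDerivAt_id x
  have hu2 : HasDerivAt (fun u : ℝ => u ^ 2) (2 * x) x := by
    simpa using hasDerivAt_pow 2 x
  have big := (((((hasDerivAt_const x (-C ^ 2)).add ((hF.const_mul 2).mul hG)).add
      (((hu.const_mul 4).mul hF).mul h3)).sub (hu2.div_const 4)).add (h3.pow 2)).add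
      (hu2.mul (hF.pow 2))
  refine big.congr_deriv ?_
  simp only [Pi.pow_apply, Pi.mul_apply]
  push_cast
  ring

/-- With `β` as in the paper: `β 0 = 0`, for `x ≥ 0` the derivative of `β` is
`β′(x) = 4(∫₀ˣ f)(∫ₓ^∞ z f) − x/2 + 2x(∫₀ˣ f)² + 2 f x ∫₀ˣ z² f + 2x f x ∫ₓ^∞ z f`,
and consequently `β x ≥ 0` for all `x ≥ 0`. -/
theorem beta_nonneg
    (f : ℝ → ℝ) (hf_cont : Continuous f) (hf_nonneg : ∀ x, 0 ≤ f x)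
    (hf_total : ∫ z, f z = 1)
    (hf_symm : ∀ x, f (-x) = f x)
    (hf_mono : ∀ x y : ℝ, 0 ≤ x → x ≤ y → f y ≤ f x)
    (hmom : Integrable (fun z => z ^ 2 * f z))
    (β : ℝ → ℝ)
    (hβ : ∀ x : ℝ, β x
        = -(∫ z in Set.Ioi (0:ℝ), z * f z) ^ 2
          + 2 * (∫ z in (0:ℝ)..x, f z) * (∫ z in (0:ℝ)..x, z ^ 2 * f z)
          + 4 * x * (∫ z in (0:ℝ)..x, f z) * (∫ z in Set.Ioi x, z * f z)
          - x ^ 2 / 4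
          + (∫ z in Set.Ioi x, z * f z) ^ 2
          + x ^ 2 * (∫ z in (0:ℝ)..x, f z) ^ 2) :
    β 0 = 0
      ∧ (∀ x : ℝ, 0 ≤ x → HasDerivAt β
          (4 * (∫ z in (0:ℝ)..x, f z) * (∫ z in Set.Ioi x, z * f z)
            - x / 2 + 2 * x * (∫ z in (0:ℝ)..x, f z) ^ 2
            + 2 * f x * (∫ z in (0:ℝ)..x, z ^ 2 * f z)
            + 2 * x * f x * (∫ z in Set.Ioi x, z * f z)) x)
      ∧ ∀ x : ℝ, 0 ≤ x → 0 ≤ β x := by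
  -- integrability
  have hint1 : Integrable f := by
    by_contra h
    rw [integral_undef h] at hf_total
    norm_num at hf_total
  have hint2 : Integrable fun z => z * f z := by
    refine (hint1.add hmom).mono ((continuous_id.mul hf_cont).aestronglyMeasurable)
      (Filter.Eventually.of_forall fun z => ?_)
    have h0 := hf_nonneg z
    have h1 : ‖z * f z‖ = |z| * f z := by
      rw [norm_mul, Real.norm_eq_abs, Real.norm_eq_abs, abs_of_nonneg h0]
    have h2 : ‖f z + z ^ 2 * f z‖ = (1 + z ^ 2) * f z := by
      rw [Real.norm_eq_abs, abs_of_nonneg (by nlinarith [sq_nonneg z])]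
      ring
    simp only [Pi.add_apply]
    rw [h1, h2]
    have h3 : |z| ≤ 1 + z ^ 2 := by nlinarith [sq_abs z, abs_nonneg z, sq_nonneg (|z| - 1)]
    exact mul_le_mul_of_nonneg_right h3 h0
  -- β 0 = 0
  have hβ0 : β 0 = 0 := by
    rw [hβ 0]
    simp [intervalIntegral.integral_same]
  -- decomposition of the tail integral
  set C : ℝ := ∫ z in Ioi (0:ℝ), z * f z with hC
  have hH_eq : ∀ u : ℝ, ∫ z in Ioi u, z * f z = C - ∫ z in (0:ℝ)..u, z * f z := by
    intro u
    have e1 := intervalIntegral.integral_Iic_add_Ioi (b := u) hint2.integrableOn hint2.integrableOn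
    have e2 := intervalIntegral.integral_Iic_add_Ioi (b := (0:ℝ)) hint2.integrableOn hint2.integrableOn
    have e3 := intervalIntegral.integral_Iic_sub_Iic (a := (0:ℝ)) (b := u) hint2.integrableOn hint2.integrableOn
    rw [hC]; linarith
  -- halves
  have hhalf : ∫ z in Ioi (0:ℝ), f z = 1 / 2 := by
    have h1 := integral_comp_neg_Ioi (0:ℝ) f
    simp only [hf_symm, neg_zero] at h1
    have h2 := intervalIntegral.integral_Iic_add_Ioi (b := (0:ℝ)) hint1.integrableOn hint1.integrableOn
    rw [hf_total] at h2
    linarith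
  have hp_eq : ∀ u : ℝ, ∫ z in Ioi u, f z = 1 / 2 - ∫ z in (0:ℝ)..u, f z := by
    intro u
    have e1 := intervalIntegral.integral_Iic_add_Ioi (b := u) hint1.integrableOn hint1.integrableOn
    have e2 := intervalIntegral.integral_Iic_add_Ioi (b := (0:ℝ)) hint1.integrableOn hint1.integrableOn
    have e3 := intervalIntegral.integral_Iic_sub_Iic (a := (0:ℝ)) (b := u) hint1.integrableOn hint1.integrableOn
    rw [hf_total] at e1 e2
    linarith
  -- derivative of β (at every point)
  have hderivβ : ∀ x : ℝ, HasDerivAt β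
      (4 * (∫ z in (0:ℝ)..x, f z) * (∫ z in Set.Ioi x, z * f z)
        - x / 2 + 2 * x * (∫ z in (0:ℝ)..x, f z) ^ 2
        + 2 * f x * (∫ z in (0:ℝ)..x, z ^ 2 * f z)
        + 2 * x * f x * (∫ z in Set.Ioi x, z * f z)) x := by
    intro x
    have h := aux_deriv f hf_cont C x
    have hfun : β =ᶠ[nhds x] (fun u => -C ^ 2
        + 2 * (∫ z in (0:ℝ)..u, f z) * (∫ z in (0:ℝ)..u, z ^ 2 * f z)
        + 4 * u * (∫ z in (0:ℝ)..u, f z) * (C - ∫ z in (0:ℝ)..u, z * f z)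
        - u ^ 2 / 4
        + (C - ∫ z in (0:ℝ)..u, z * f z) ^ 2
        + u ^ 2 * (∫ z in (0:ℝ)..u, f z) ^ 2) := by
      refine Filter.Eventually.of_forall fun u => ?_
      rw [hβ u, hH_eq u]
    rw [hH_eq x]
    exact h.congr_of_eventuallyEq hfun
  -- nonnegativity of the derivative for x ≥ 0
  have hD_nonneg : ∀ x : ℝ, 0 ≤ x →
      0 ≤ 4 * (∫ z in (0:ℝ)..x, f z) * (∫ z in Set.Ioi x, z * f z)
        - x / 2 + 2 * x * (∫ z in (0:ℝ)..x, f z) ^ 2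
        + 2 * f x * (∫ z in (0:ℝ)..x, z ^ 2 * f z)
        + 2 * x * f x * (∫ z in Set.Ioi x, z * f z) := by
    intro x hx
    set p : ℝ := ∫ z in Ioi x, f z with hp
    set H : ℝ := ∫ z in Ioi x, z * f z with hH
    set F : ℝ := ∫ z in (0:ℝ)..x, f z with hF
    set G : ℝ := ∫ z in (0:ℝ)..x, z ^ 2 * f z with hG
    have hFp : F = 1 / 2 - p := by rw [hF, hp, hp_eq x]; ring
    have hp0 : 0 ≤ p := setIntegral_nonneg measurableSet_Ioi fun z _ => hf_nonneg z
    have hG0 : 0 ≤ G :=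
      intervalIntegral.integral_nonneg hx fun z _ => mul_nonneg (sq_nonneg z) (hf_nonneg z)
    have hH0 : 0 ≤ H := setIntegral_nonneg measurableSet_Ioi fun z hz =>
      mul_nonneg (le_trans hx (le_of_lt hz)) (hf_nonneg z)
    have hfx0 : 0 ≤ f x := hf_nonneg x
    have hQ0 : x * p ≤ H := by
      have h1 : 0 ≤ ∫ z in Ioi x, (z - x) * f z := by
        refine setIntegral_nonneg measurableSet_Ioi fun z hz => ?_
        exact mul_nonneg (by linarith [mem_Ioi.mp hz]) (hf_nonneg z)
      have h2 : ∫ z in Ioi x, (z - x) * f z = H - x * p := by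
        have heq : ∀ z : ℝ, (z - x) * f z = z * f z - x * f z := fun z => by ring
        simp_rw [heq]
        rw [integral_sub hint2.integrableOn (hint1.integrableOn.const_mul x),
          MeasureTheory.integral_const_mul]
      linarith
    have hFfx : x * f x ≤ F := by
      have h1 : ∫ z in (0:ℝ)..x, f x ≤ ∫ z in (0:ℝ)..x, f z := by
        refine intervalIntegral.integral_mono_on hx (intervalIntegrable_const)
          (hf_cont.intervalIntegrable 0 x) fun z hz => hf_mono z x hz.1 hz.2
      rw [intervalIntegral.integral_const, smul_eq_mul, sub_zero] at h1
      exact h1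
    have hF0 : 0 ≤ F := le_trans (mul_nonneg hx hfx0) hFfx
    -- key inequality
    have key : x * p ^ 2 ≤ x * f x * H + 2 * F * (H - x * p) := by
      rcases le_or_gt p (x * f x) with hcase | hcase
      · have h1 : x * p * p ≤ H * p := mul_le_mul_of_nonneg_right hQ0 hp0
        have h2 : H * p ≤ H * (x * f x) := mul_le_mul_of_nonneg_left hcase hH0
        have h3 : 0 ≤ 2 * F * (H - x * p) :=
          mul_nonneg (by linarith) (by linarith)
        nlinarith
      · have hfx : 0 < f x := by
          rcases hfx0.lt_or_eq with h | h
          · exact h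
          · exfalso
            have hz0 : ∀ z ∈ Ioi x, f z = (fun _ : ℝ => (0:ℝ)) z := fun z hz =>
              le_antisymm (h ▸ hf_mono x z hx (le_of_lt hz)) (hf_nonneg z)
            have : p = 0 := by
              rw [hp, setIntegral_congr_fun measurableSet_Ioi hz0, integral_zero]
            rw [← h, mul_zero] at hcase
            linarith
        have hkeyQ := key_Q f hf_nonneg hf_mono hint1 hint2 x hx hfx
        rw [← hp, ← hH] at hkeyQ
        have hQn : 0 ≤ H - x * p := by linarith
        have h1 : x * p ^ 2 ≤ x * (2 * f x * (H - x * p)) :=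
          mul_le_mul_of_nonneg_left hkeyQ hx
        have h2 : x * f x * (H - x * p) ≤ F * (H - x * p) :=
          mul_le_mul_of_nonneg_right hFfx hQn
        have h3 : 0 ≤ x * f x * H := mul_nonneg (mul_nonneg hx hfx0) hH0
        nlinarith
    have hfG : 0 ≤ 2 * f x * G := mul_nonneg (by linarith) hG0
    rw [hFp] at key ⊢
    nlinarith [key, hfG]
  refine ⟨hβ0, fun x _ => hderivβ x, ?_⟩
  intro x hx
  have hmono : MonotoneOn β (Ici 0) := by
    apply monotoneOn_of_deriv_nonneg (convex_Ici 0)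
      (fun y _ => (hderivβ y).continuousAt.continuousWithinAt)
      (fun y _ => (hderivβ y).differentiableAt.differentiableWithinAt)
    intro y hy
    rw [interior_Ici] at hy
    rw [(hderivβ y).deriv]
    exact hD_nonneg y (le_of_lt hy)
  have h := hmono (self_mem_Ici) (mem_Ici.mpr hx) hx
  rw [hβ0] at h
  exact h
end
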